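/- For (λ,μ) ∈ J_{m,ℓ}, the set of row increasing tableaux on λ/μ^ equals Ẇ^{λ-μ} T_0, the orbit of the row reading tableau T_0 under the set of minimal length coset representatives for Ẇ/Ẇ_{λ-μ}. -/

import Mathlib

/-- The periodic skew diagram `λ/μ^` attached to `(λ,μ)` (rows are indexed
`1,…,m`, with the `0`-indexed data `lam i = λ_{i+1}`, `mu i = μ_{i+1}`):
`λ/μ^ = ⋃_{k∈ℤ} (λ/μ + k(m,-ℓ))`. -/
def hatD (m ℓ : ℕ) (lam mu : ℕ → ℤ) : Set (ℤ × ℤ) :=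
  {p | ∃ (k : ℤ) (i : ℕ), i < m ∧ p.1 = (i : ℤ) + 1 + k * m ∧
        mu i + 1 ≤ p.2 + k * ℓ ∧ p.2 + k * ℓ ≤ lam i}

/-- `v ∈ P̂⁺_{m,ℓ}`: weakly decreasing with spread at most `ℓ`. -/
def isDom (m ℓ : ℕ) (v : ℕ → ℤ) : Prop :=
  (∀ i j : ℕ, i ≤ j → j < m → v j ≤ v i) ∧ v 0 - v (m - 1) ≤ (ℓ : ℤ)

/-- `(λ,μ) ∈ 𝒥_{m,ℓ}`. -/
def memJ (n m ℓ : ℕ) (lam mu : ℕ → ℤ) : Prop :=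
  1 ≤ m ∧ isDom m ℓ lam ∧ isDom m ℓ mu ∧ (∀ i < m, mu i ≤ lam i) ∧
    (∑ i ∈ Finset.range m, (lam i - mu i)) = (n : ℤ)

/-- `(λ,μ) ∈ 𝒥*_{m,ℓ}` (no empty rows: `λ_i > μ_i`). -/
def memJstar (n m ℓ : ℕ) (lam mu : ℕ → ℤ) : Prop :=
  1 ≤ m ∧ isDom m ℓ lam ∧ isDom m ℓ mu ∧ (∀ i < m, mu i < lam i) ∧
    (∑ i ∈ Finset.range m, (lam i - mu i)) = (n : ℤ)

/-- A tableau on the (`(m,-ℓ)`-periodic) diagram `Λ`: a bijection `Λ → ℤ`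
with `T(u + (m,-ℓ)) = T(u) + n`. -/
def IsTab (n m ℓ : ℕ) (Λ : Set (ℤ × ℤ)) (T : ℤ × ℤ → ℤ) : Prop :=
  Set.BijOn T Λ Set.univ ∧ ∀ u ∈ Λ, T (u + ((m : ℤ), -(ℓ : ℤ))) = T u + (n : ℤ)

/-- Row increasing. -/
def RowInc (Λ : Set (ℤ × ℤ)) (T : ℤ × ℤ → ℤ) : Prop :=
  ∀ a b : ℤ, (a, b) ∈ Λ → (a, b + 1) ∈ Λ → T (a, b) < T (a, b + 1)

/-- Column increasing. -/
def ColInc (Λ : Set (ℤ × ℤ)) (T : ℤ × ℤ → ℤ) : Prop :=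
  ∀ a b : ℤ, (a, b) ∈ Λ → (a + 1, b) ∈ Λ → T (a, b) < T (a + 1, b)

/-- A standard (row-column increasing) tableau. -/
def IsStdTab (n m ℓ : ℕ) (Λ : Set (ℤ × ℤ)) (T : ℤ × ℤ → ℤ) : Prop :=
  IsTab n m ℓ Λ T ∧ RowInc Λ T ∧ ColInc Λ T

/-- `F` is the content function of the tableau `T`: `F(T(a,b)) = b - a`. -/
def IsContent (Λ : Set (ℤ × ℤ)) (T : ℤ × ℤ → ℤ) (F : ℤ → ℤ) : Prop :=
  ∀ u ∈ Λ, F (T u) = u.2 - u.1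

/-- Partial sums `n_t = Σ_{s ≤ t} (λ_s - μ_s)` (`0`-indexed: `ps t = n_t`). -/
def ps (lam mu : ℕ → ℤ) (t : ℕ) : ℤ := ∑ s ∈ Finset.range t, (lam s - mu s)

/-- `T₀` is the row reading tableau on `λ/μ^`:
`T₀(i, μ_i + j) = Σ_{k<i}(λ_k - μ_k) + j`. -/
def IsRowReading (n m ℓ : ℕ) (lam mu : ℕ → ℤ) (T0 : ℤ × ℤ → ℤ) : Prop :=
  IsTab n m ℓ (hatD m ℓ lam mu) T0 ∧
  ∀ i : ℕ, i < m → ∀ j : ℤ, 1 ≤ j → j ≤ lam i - mu i →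
    T0 ((i : ℤ) + 1, mu i + j) = ps lam mu i + j


lemma hatD_shift (m ℓ : ℕ) (lam mu : ℕ → ℤ) (u : ℤ × ℤ)
    (h : u ∈ hatD m ℓ lam mu) (k : ℤ) :
    (u.1 + k * m, u.2 - k * ℓ) ∈ hatD m ℓ lam mu := by
  obtain ⟨k0, i, hi, h1, h2, h3⟩ := h
  refine ⟨k0 + k, i, hi, by rw [h1]; ring, ?_, ?_⟩
  · have e : u.2 - k * ℓ + (k0 + k) * ℓ = u.2 + k0 * ℓ := by ring
    rw [e]; exact h2
  · have e : u.2 - k * ℓ + (k0 + k) * ℓ = u.2 + k0 * ℓ := by ring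
    rw [e]; exact h3

lemma T0_shift (n m ℓ : ℕ) (lam mu : ℕ → ℤ) (T0 : ℤ × ℤ → ℤ)
    (hT : IsTab n m ℓ (hatD m ℓ lam mu) T0) (u : ℤ × ℤ)
    (hu : u ∈ hatD m ℓ lam mu) (k : ℤ) :
    T0 (u.1 + k * m, u.2 - k * ℓ) = T0 u + k * n := by
  induction k using Int.induction_on with
  | zero => simp
  | succ k ih =>
      have hmem := hatD_shift m ℓ lam mu u hu k
      have h2 := hT.2 _ hmem
      have e : (u.1 + (k : ℤ) * m, u.2 - (k : ℤ) * ℓ) + ((m : ℤ), -(ℓ : ℤ))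
          = (u.1 + ((k : ℤ) + 1) * m, u.2 - ((k : ℤ) + 1) * ℓ) := by
        simp [Prod.ext_iff]; constructor <;> ring
      rw [e, ih] at h2
      rw [h2]; ring
  | pred k ih =>
      have hmem := hatD_shift m ℓ lam mu u hu (-(k : ℤ) - 1)
      have h2 := hT.2 _ hmem
      have e : (u.1 + (-(k : ℤ) - 1) * m, u.2 - (-(k : ℤ) - 1) * ℓ) + ((m : ℤ), -(ℓ : ℤ))
          = (u.1 + (-(k : ℤ)) * m, u.2 - (-(k : ℤ)) * ℓ) := by
        simp [Prod.ext_iff]; constructor <;> ring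
      rw [e, ih] at h2
      linarith [h2]

lemma w_shift (n : ℕ) (w : ℤ → ℤ) (hwp : ∀ j : ℤ, w (j + (n : ℤ)) = w j + (n : ℤ))
    (k x : ℤ) : w (x + k * n) = w x + k * n := by
  induction k using Int.induction_on with
  | zero => simp
  | succ k ih =>
      have e : x + ((k : ℤ) + 1) * n = (x + (k : ℤ) * n) + n := by ring
      rw [e, hwp, ih]; ring
  | pred k ih =>
      have h2 := hwp (x + (-(k : ℤ) - 1) * n)
      have e : x + (-(k : ℤ) - 1) * n + n = x + (-(k : ℤ)) * n := by ring
      rw [e, ih] at h2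
      linarith [h2]

lemma ps_succ (lam mu : ℕ → ℤ) (t : ℕ) :
    ps lam mu (t + 1) = ps lam mu t + (lam t - mu t) := by
  simp [ps, Finset.sum_range_succ]; ring

/-- the set of row increasing tableaux on `λ/μ^` equals
`Ẇ^{λ-μ} T₀`: for `w` in the extended affine Weyl group, `w T₀` is row
increasing iff `w ∈ Ẇ^{λ-μ}`, i.e. iff `w` maps every positive root
`α_{ij} ∈ Ṙ⁺_{λ-μ}` (pairs `i < j` lying in the same row block
`(n_t, n_{t+1}]`) to a positive root, i.e. `w(i) < w(j)` for such pairs. -/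
theorem rowInc_iff_minCoset (n m ℓ : ℕ) (hn : 2 ≤ n) (lam mu : ℕ → ℤ)
    (hJ : memJ n m ℓ lam mu)
    (T0 : ℤ × ℤ → ℤ) (hT0 : IsRowReading n m ℓ lam mu T0)
    (w : ℤ → ℤ) (hwb : Function.Bijective w)
    (hwp : ∀ j : ℤ, w (j + (n : ℤ)) = w j + (n : ℤ)) :
    RowInc (hatD m ℓ lam mu) (fun u => w (T0 u)) ↔
      ∀ (t : ℕ) (i j : ℤ), t < m → ps lam mu t < i → i < j → j ≤ ps lam mu (t + 1) →
        w i < w j := by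
  obtain ⟨hT, hval⟩ := hT0
  have step : RowInc (hatD m ℓ lam mu) (fun u => w (T0 u)) →
      ∀ t : ℕ, t < m → ∀ x : ℤ, ps lam mu t < x → x + 1 ≤ ps lam mu (t + 1) →
        w x < w (x + 1) := by
    intro h t ht x hx hx1
    set j0 : ℤ := x - ps lam mu t with hj0
    have hps := ps_succ lam mu t
    have h1 : 1 ≤ j0 := by omega
    have h2 : j0 + 1 ≤ lam t - mu t := by omega
    have mem1 : ((t : ℤ) + 1, mu t + j0) ∈ hatD m ℓ lam mu :=
      ⟨0, t, ht, by ring, by simp; omega, by simp; omega⟩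
    have mem2 : ((t : ℤ) + 1, mu t + j0 + 1) ∈ hatD m ℓ lam mu :=
      ⟨0, t, ht, by ring, by simp; omega, by simp; omega⟩
    have hr := h ((t : ℤ) + 1) (mu t + j0) mem1 mem2
    have e1 : T0 ((t : ℤ) + 1, mu t + j0) = ps lam mu t + j0 := hval t ht j0 h1 (by omega)
    have e2 : T0 ((t : ℤ) + 1, mu t + (j0 + 1)) = ps lam mu t + (j0 + 1) :=
      hval t ht (j0 + 1) (by omega) h2
    have e3 : mu t + j0 + 1 = mu t + (j0 + 1) := by ring
    simp only [e1, e3, e2] at hr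
    have e4 : ps lam mu t + j0 = x := by omega
    have e5 : ps lam mu t + (j0 + 1) = x + 1 := by omega
    rw [e4, e5] at hr
    exact hr
  constructor
  · intro h t i j ht hi hij hj
    have key : ∀ d : ℕ, ∀ j : ℤ, j - i = (d : ℤ) + 1 → i < j → j ≤ ps lam mu (t + 1) →
        w i < w j := by
      intro d
      induction d with
      | zero =>
          intro j hd _ hj
          have : j = i + 1 := by omega
          subst this
          exact step h t ht i hi hj
      | succ d ih =>
          intro j hd _ hj
          have h1 : w i < w (j - 1) := ih (j - 1) (by omega) (by omega) (by omega)
          have h2 : w (j - 1) < w (j - 1 + 1) := step h t ht (j - 1) (by omega) (by omega)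
          have e : j - 1 + 1 = j := by ring
          rw [e] at h2
          omega
    exact key (j - i - 1).toNat j (by omega) hij hj
  · intro h a b hab hab1
    obtain ⟨k, i, hi, ha, hb1, hb2⟩ := hab
    obtain ⟨k', i', hi', ha', hb1', hb2'⟩ := hab1
    have hm1 : (1 : ℤ) ≤ m := by exact_mod_cast hJ.1
    have hkk : k = k' ∧ (i : ℤ) = i' := by
      have he : (i : ℤ) - i' = (k' - k) * m := by
        have := ha.symm.trans ha'
        linarith [this]
      have hbi : -(m : ℤ) < (i : ℤ) - i' ∧ (i : ℤ) - i' < m := by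
        constructor <;> [skip; skip] <;>
          · have := hi; have := hi'
            push_cast
            omega
      rcases lt_trichotomy k k' with hlt | heq | hgt
      · exfalso
        have : (1 : ℤ) ≤ k' - k := by omega
        nlinarith [hbi.2, he]
      · constructor
        · exact heq
        · rw [heq] at he; simp at he; omega
      · exfalso
        have : k' - k ≤ -1 := by omega
        nlinarith [hbi.1, he]
    obtain ⟨hk, hii⟩ := hkk
    subst hk
    have hie : i = i' := by exact_mod_cast hii
    subst hie
    set j0 : ℤ := b + k * ℓ - mu i with hj0
    have h1 : 1 ≤ j0 := by omega
    have h2 : j0 + 1 ≤ lam i - mu i := by omega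
    have mem1 : ((i : ℤ) + 1, mu i + j0) ∈ hatD m ℓ lam mu :=
      ⟨0, i, hi, by ring, by simp; omega, by simp; omega⟩
    have mem2 : ((i : ℤ) + 1, mu i + j0 + 1) ∈ hatD m ℓ lam mu :=
      ⟨0, i, hi, by ring, by simp; omega, by simp; omega⟩
    have sh1 := T0_shift n m ℓ lam mu T0 hT ((i : ℤ) + 1, mu i + j0) mem1 k
    have sh2 := T0_shift n m ℓ lam mu T0 hT ((i : ℤ) + 1, mu i + j0 + 1) mem2 k
    have eq1 : ((i : ℤ) + 1 + k * m, mu i + j0 - k * ℓ) = (a, b) := by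
      rw [Prod.ext_iff]; constructor
      · simp only; linarith [ha]
      · simp only; linarith [hj0]
    have eq2 : ((i : ℤ) + 1 + k * m, mu i + j0 + 1 - k * ℓ) = (a, b + 1) := by
      rw [Prod.ext_iff]; constructor
      · simp only; linarith [ha]
      · simp only; linarith [hj0]
    simp only at sh1 sh2
    rw [eq1] at sh1
    rw [eq2] at sh2
    have e1 : T0 ((i : ℤ) + 1, mu i + j0) = ps lam mu i + j0 := hval i hi j0 h1 (by omega)
    have e2 : T0 ((i : ℤ) + 1, mu i + (j0 + 1)) = ps lam mu i + (j0 + 1) :=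
      hval i hi (j0 + 1) (by omega) h2
    have e3 : mu i + j0 + 1 = mu i + (j0 + 1) := by ring
    rw [e3, e2] at sh2
    rw [e1] at sh1
    show w (T0 (a, b)) < w (T0 (a, b + 1))
    rw [sh1, sh2]
    have ws1 := w_shift n w hwp k (ps lam mu i + j0)
    have ws2 := w_shift n w hwp k (ps lam mu i + (j0 + 1))
    rw [ws1, ws2]
    have hps := ps_succ lam mu i
    have hw := h i (ps lam mu i + j0) (ps lam mu i + (j0 + 1)) hi (by omega) (by omega)
      (by omega)
    omega
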